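/- Let A be n×n orthogonal, ρ₀ ∈ (0,1], and suppose ‖A_{JᶜT}ᵀ A_{JᶜT}‖ ≤ 1 − ρ₀/2. Then for all vectors z ∈ ℝ^{|Jᶜ|} and w ∈ ℝ^{|T|}: ‖A_{Jᶜ•}ᵀ z + ι_T w‖₂² ≥ (1 − √(1 − ρ₀/2)) (‖z‖₂² + ‖w‖₂²) ≥ (ρ₀/4)(‖z‖₂² + ‖w‖₂²), where ι_T w denotes the vector in ℝⁿ equal to w on T and zero on Tᶜ. -/

import Mathlib

open Matrix

/-- Spectral (ℓ²→ℓ² operator) norm of a real matrix. -/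
noncomputable def specNorm {α β : Type*} [Fintype α] [Fintype β] [DecidableEq β]
    (B : Matrix α β ℝ) : ℝ :=
  ‖LinearMap.toContinuousLinearMap (Matrix.toEuclideanLin B)‖

/-- Euclidean (ℓ²) norm of a finitely indexed real vector. -/
noncomputable def l2 {α : Type*} [Fintype α] (v : α → ℝ) : ℝ := Real.sqrt (∑ i, v i ^ 2)

/-- ℓ¹ norm of a finitely indexed real vector. -/
def l1 {α : Type*} [Fintype α] (v : α → ℝ) : ℝ := ∑ i, |v i|

/-- Submatrix of `A` with rows indexed by `J` and columns indexed by `T`. -/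
def sub {n : ℕ} (A : Matrix (Fin n) (Fin n) ℝ) (J T : Finset (Fin n)) :
    Matrix J T ℝ := A.submatrix (fun i => (i : Fin n)) (fun j => (j : Fin n))

/-- Submatrix of `A` with rows indexed by `J` (all columns kept). -/
def rowSub {n : ℕ} (A : Matrix (Fin n) (Fin n) ℝ) (J : Finset (Fin n)) :
    Matrix J (Fin n) ℝ := A.submatrix (fun i => (i : Fin n)) id

-- operator norm bound: x ⬝ᵥ (M *ᵥ x) ≤ specNorm M * ∑ x²
lemma dot_mulVec_le {α : Type*} [Fintype α] [DecidableEq α] (M : Matrix α α ℝ) (x : α → ℝ) :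
    (M *ᵥ x) ⬝ᵥ x ≤ specNorm M * ∑ i, x i ^ 2 := by
  set X : EuclideanSpace ℝ α := (WithLp.equiv 2 _).symm x with hX
  have hXnorm : ‖X‖ ^ 2 = ∑ i, x i ^ 2 := by
    rw [EuclideanSpace.norm_eq, Real.sq_sqrt (by positivity)]
    simp [hX, sq_abs]
  have h1 : (M *ᵥ x) ⬝ᵥ x = (inner ℝ ((WithLp.equiv 2 (α → ℝ)).symm (M *ᵥ x)) X : ℝ) := by
    simp [PiLp.inner_apply, RCLike.inner_apply, dotProduct, hX, mul_comm]
  have h2 : (inner ℝ ((WithLp.equiv 2 (α → ℝ)).symm (M *ᵥ x)) X : ℝ) ≤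
      ‖(WithLp.equiv 2 (α → ℝ)).symm (M *ᵥ x)‖ * ‖X‖ := real_inner_le_norm _ _
  have h3 : ‖(WithLp.equiv 2 (α → ℝ)).symm (M *ᵥ x)‖ ≤ specNorm M * ‖X‖ := by
    have h := (LinearMap.toContinuousLinearMap (Matrix.toEuclideanLin M)).le_opNorm X
    have heq : (LinearMap.toContinuousLinearMap (Matrix.toEuclideanLin M)) X
        = (WithLp.equiv 2 (α → ℝ)).symm (M *ᵥ x) := rfl
    rw [heq] at h
    exact h
  have hXn : (0:ℝ) ≤ ‖X‖ := norm_nonneg _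
  calc (M *ᵥ x) ⬝ᵥ x = _ := h1
    _ ≤ ‖(WithLp.equiv 2 (α → ℝ)).symm (M *ᵥ x)‖ * ‖X‖ := h2
    _ ≤ specNorm M * ‖X‖ * ‖X‖ := mul_le_mul_of_nonneg_right h3 hXn
    _ = specNorm M * ‖X‖ ^ 2 := by ring
    _ = specNorm M * ∑ i, x i ^ 2 := by rw [hXnorm]

lemma final_ineq (a b S α : ℝ) (hα : 0 ≤ α) (habs : -(α * (a * b)) ≤ S) :
    a ^ 2 + 2 * S + b ^ 2 ≥ (1 - α) * (a ^ 2 + b ^ 2) := by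
  nlinarith [mul_nonneg hα (sq_nonneg (a - b))]

theorem stmt11 {n : ℕ} (A : Matrix (Fin n) (Fin n) ℝ)
    (hA : Aᵀ * A = 1) (hA' : A * Aᵀ = 1) (J T : Finset (Fin n))
    (ρ₀ : ℝ) (hρ0 : 0 < ρ₀) (hρ1 : ρ₀ ≤ 1)
    (hnorm : specNorm ((sub A Jᶜ T)ᵀ * sub A Jᶜ T) ≤ 1 - ρ₀ / 2)
    (z : ↥(Jᶜ) → ℝ) (w : ↥T → ℝ) :
    l2 ((rowSub A Jᶜ)ᵀ.mulVec z +
        fun i : Fin n => if h : i ∈ T then w ⟨i, h⟩ else 0) ^ 2 ≥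
      (1 - Real.sqrt (1 - ρ₀ / 2)) * (l2 z ^ 2 + l2 w ^ 2) ∧
    (1 - Real.sqrt (1 - ρ₀ / 2)) * (l2 z ^ 2 + l2 w ^ 2) ≥
      (ρ₀ / 4) * (l2 z ^ 2 + l2 w ^ 2) := by
  set α := Real.sqrt (1 - ρ₀ / 2) with hαdef
  have hαnn : 0 ≤ α := Real.sqrt_nonneg _
  have hα1 : α ≤ 1 - ρ₀ / 4 := by
    rw [hαdef, show (1 - ρ₀/4 : ℝ) = Real.sqrt ((1 - ρ₀/4)^2) from
      (Real.sqrt_sq (by linarith)).symm]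
    apply Real.sqrt_le_sqrt; nlinarith
  have hz2 : l2 z ^ 2 = ∑ j, z j ^ 2 := Real.sq_sqrt (by positivity)
  have hw2 : l2 w ^ 2 = ∑ t, w t ^ 2 := Real.sq_sqrt (by positivity)
  have hsum_nn : (0:ℝ) ≤ l2 z ^ 2 + l2 w ^ 2 := by positivity
  set u : Fin n → ℝ := (rowSub A Jᶜ)ᵀ.mulVec z with hu_def
  set e : Fin n → ℝ := fun i : Fin n => if h : i ∈ T then w ⟨i, h⟩ else 0 with he_def
  set B := rowSub A Jᶜ with hB_def
  set C := sub A Jᶜ T with hC_def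
  -- B * Bᵀ = 1
  have hBB : B * Bᵀ = 1 := by
    ext j k
    have h := congrFun (congrFun hA' (↑j : Fin n)) ↑k
    simp only [Matrix.mul_apply, Matrix.transpose_apply, Matrix.one_apply] at h ⊢
    simp only [hB_def, rowSub, Matrix.submatrix_apply, id] at h ⊢
    rw [h]
    exact if_congr Subtype.ext_iff.symm rfl rfl
  -- dite sums over T
  have hdite : ∀ f : Fin n → ℝ,
      ∑ i : Fin n, f i * e i = ∑ t : ↥T, f ↑t * w t := by
    intro f
    rw [show (Finset.univ : Finset (Fin n)) = Finset.univ from rfl]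
    rw [← Finset.sum_subset (Finset.subset_univ T)
      (fun i _ hi => by simp [he_def, hi])]
    rw [← Finset.sum_coe_sort T (fun i => f i * e i)]
    exact Finset.sum_congr rfl (fun t _ => by simp [he_def, t.2])
  have he2 : ∑ i, e i ^ 2 = ∑ t, w t ^ 2 := by
    have := hdite e
    simp only [← sq] at this
    rw [this]
    exact Finset.sum_congr rfl (fun t _ => by simp [he_def, t.2, sq])
  -- B *ᵥ e = C *ᵥ w
  have hBe : B *ᵥ e = C *ᵥ w := by
    funext j
    show ∑ i, B j i * e i = _
    rw [hdite (B j)]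
    exact Finset.sum_congr rfl (fun t _ => by simp [hB_def, hC_def, rowSub, _root_.sub, Matrix.mulVec, dotProduct])
  -- ∑ u² = ∑ z²
  have hu2 : ∑ i, u i ^ 2 = ∑ j, z j ^ 2 := by
    have : ∑ i, u i ^ 2 = u ⬝ᵥ (Bᵀ *ᵥ z) := by
      simp [dotProduct, sq, hu_def]
    rw [this, Matrix.dotProduct_mulVec, Matrix.vecMul_transpose, hu_def,
      Matrix.mulVec_mulVec, hBB, Matrix.one_mulVec]
    simp [dotProduct, sq]
  -- cross term
  have hS : ∑ i, u i * e i = z ⬝ᵥ (C *ᵥ w) := by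
    have h1 : ∑ i, u i * e i = u ⬝ᵥ e := rfl
    rw [h1, hu_def, Matrix.mulVec_transpose, ← Matrix.dotProduct_mulVec, hBe]
  set S := z ⬝ᵥ (C *ᵥ w) with hS_def
  -- bound ∑ (C *ᵥ w)² ≤ (1 - ρ₀/2) ∑ w²
  have hCw : ∑ j, ((C *ᵥ w) j) ^ 2 ≤ (1 - ρ₀ / 2) * ∑ t, w t ^ 2 := by
    have h1 : ((Cᵀ * C) *ᵥ w) ⬝ᵥ w = ∑ j, ((C *ᵥ w) j) ^ 2 := by
      rw [← Matrix.mulVec_mulVec, Matrix.mulVec_transpose, ← Matrix.dotProduct_mulVec]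
      simp [dotProduct, sq]
    rw [← h1]
    calc ((Cᵀ * C) *ᵥ w) ⬝ᵥ w ≤ specNorm (Cᵀ * C) * ∑ t, w t ^ 2 := dot_mulVec_le _ _
      _ ≤ (1 - ρ₀ / 2) * ∑ t, w t ^ 2 := by
          apply mul_le_mul_of_nonneg_right hnorm (by positivity)
  -- |S| ≤ α * l2 z * l2 w
  have hSbound : |S| ≤ α * (l2 z * l2 w) := by
    have hcs : S ^ 2 ≤ (∑ j, z j ^ 2) * ∑ j, ((C *ᵥ w) j) ^ 2 := by
      simpa [hS_def, dotProduct] using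
        Finset.sum_mul_sq_le_sq_mul_sq Finset.univ z (C *ᵥ w)
    have h2 : S ^ 2 ≤ (α * (l2 z * l2 w)) ^ 2 := by
      have hzn : (0:ℝ) ≤ ∑ j, z j ^ 2 := by positivity
      have hα2 : α ^ 2 = 1 - ρ₀ / 2 := Real.sq_sqrt (by linarith)
      calc S ^ 2 ≤ (∑ j, z j ^ 2) * ∑ j, ((C *ᵥ w) j) ^ 2 := hcs
        _ ≤ (∑ j, z j ^ 2) * ((1 - ρ₀ / 2) * ∑ t, w t ^ 2) :=
            mul_le_mul_of_nonneg_left hCw hzn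
        _ = (α * (l2 z * l2 w)) ^ 2 := by rw [← hz2, ← hw2] at *; rw [← hα2]; ring
    calc |S| = Real.sqrt (S ^ 2) := (Real.sqrt_sq_eq_abs S).symm
      _ ≤ Real.sqrt ((α * (l2 z * l2 w)) ^ 2) := Real.sqrt_le_sqrt h2
      _ = α * (l2 z * l2 w) := Real.sqrt_sq (mul_nonneg hαnn (mul_nonneg
            (Real.sqrt_nonneg _) (Real.sqrt_nonneg _)))
  -- expand the LHS
  have hlhs : l2 (u + e) ^ 2 = (∑ j, z j ^ 2) + 2 * S + ∑ t, w t ^ 2 := by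
    have : l2 (u + e) ^ 2 = ∑ i, (u i + e i) ^ 2 := Real.sq_sqrt (by positivity)
    rw [this]
    have expand : ∑ i, (u i + e i) ^ 2 =
        (∑ i, u i ^ 2) + 2 * (∑ i, u i * e i) + ∑ i, e i ^ 2 := by
      rw [Finset.mul_sum, ← Finset.sum_add_distrib, ← Finset.sum_add_distrib]
      exact Finset.sum_congr rfl fun i _ => by ring
    rw [expand, hu2, hS, he2, ← hz2, ← hw2]
  have habs : -(α * (l2 z * l2 w)) ≤ S := neg_le_of_abs_le hSbound
  clear_value S α
  constructor
  · linarith [hlhs, final_ineq (l2 z) (l2 w) S α hαnn habs]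
  · have h := mul_le_mul_of_nonneg_right (show ρ₀ / 4 ≤ 1 - α by linarith) hsum_nn
    linarith
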